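/- arXiv:1303.3690 — 2 statements merged into one kernel-verified Lean document; each statement's English description precedes it below -/
import Mathlib

section
/- Subadditivity of packing entropy under products: for any Z_1, Z_2 ⊆ X, h^P(Z_1 × Z_2) ≤ h^P(Z_1) + h^P(Z_2), where the product is taken in the product system. -/
open Filter Set
open scoped ENNReal NNReal

namespace BowenProduct

variable {X : Type*} [PseudoMetricSpace X]

/-- The open Bowen ball of order `n` and radius `ε` around `x`:
the ball for the `n`-th Bowen metric `d_n(x,y) = max_{0 ≤ k ≤ n-1} d(T^k x, T^k y)`. -/
def bowenBall (T : X → X) (n : ℕ) (x : X) (ε : ℝ) : Set X :=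
  {y | ∀ k < n, dist (T^[k] x) (T^[k] y) < ε}

/-- The closed Bowen ball of order `n` and radius `ε` around `x`. -/
def bowenClosedBall (T : X → X) (n : ℕ) (x : X) (ε : ℝ) : Set X :=
  {y | ∀ k < n, dist (T^[k] x) (T^[k] y) ≤ ε}

/-- `M^s_{N,ε}(Z)`: the infimum of `Σ_i exp(-s n_i)` over all finite or countable families
`{B_{n_i}(x_i, ε)}` with `x_i ∈ X`, `n_i ≥ N`, covering `Z`. -/
noncomputable def coverSum (T : X → X) (s : ℝ) (N : ℕ) (ε : ℝ) (Z : Set X) : ℝ≥0∞ :=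
  ⨅ (F : Set (X × ℕ)) (_ : F.Countable) (_ : ∀ p ∈ F, N ≤ p.2)
    (_ : Z ⊆ ⋃ p ∈ F, bowenBall T p.2 p.1 ε),
    ∑' p : F, ENNReal.ofReal (Real.exp (-s * ((p : X × ℕ).2 : ℝ)))

/-- `M^s_ε(Z) = lim_{N → ∞} M^s_{N,ε}(Z)`; the limit exists and equals the supremum
since `M^s_{N,ε}(Z)` does not decrease as `N` increases. -/
noncomputable def coverMeasureEps (T : X → X) (s ε : ℝ) (Z : Set X) : ℝ≥0∞ :=
  ⨆ N : ℕ, coverSum T s N ε Z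

/-- `M^s(Z) = lim_{ε → 0} M^s_ε(Z)`; the limit exists and equals the supremum
since `M^s_ε(Z)` does not decrease as `ε` decreases. -/
noncomputable def coverMeasure (T : X → X) (s : ℝ) (Z : Set X) : ℝ≥0∞ :=
  ⨆ (ε : ℝ) (_ : 0 < ε), coverMeasureEps T s ε Z

/-- Bowen's topological entropy `h^B(Z)`: the critical value of `s ≥ 0` at which
`M^s(Z)` jumps from `∞` to `0`, i.e. `inf {s ≥ 0 : M^s(Z) = 0}` (and `∞` if no such `s`). -/
noncomputable def bowenEntropy (T : X → X) (Z : Set X) : ℝ≥0∞ :=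
  ⨅ (s : ℝ≥0) (_ : coverMeasure T (s : ℝ) Z = 0), (s : ℝ≥0∞)

/-- `P^s_{N,ε}(Z)`: the supremum of `Σ_i exp(-s n_i)` over all finite or countable pairwise
disjoint families `{B̄_{n_i}(x_i, ε)}` with `x_i ∈ Z`, `n_i ≥ N`. -/
noncomputable def packingSum (T : X → X) (s : ℝ) (N : ℕ) (ε : ℝ) (Z : Set X) : ℝ≥0∞ :=
  ⨆ (F : Set (X × ℕ)) (_ : F.Countable) (_ : ∀ p ∈ F, p.1 ∈ Z ∧ N ≤ p.2)
    (_ : F.PairwiseDisjoint fun p => bowenClosedBall T p.2 p.1 ε),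
    ∑' p : F, ENNReal.ofReal (Real.exp (-s * ((p : X × ℕ).2 : ℝ)))

/-- `P^s_ε(Z) = lim_{N → ∞} P^s_{N,ε}(Z)`; the limit exists and equals the infimum
since `P^s_{N,ε}(Z)` does not increase as `N` increases. -/
noncomputable def packingPre (T : X → X) (s ε : ℝ) (Z : Set X) : ℝ≥0∞ :=
  ⨅ N : ℕ, packingSum T s N ε Z

/-- `𝒫^s_ε(Z) = inf { Σ_{i=1}^∞ P^s_ε(Z_i) : ∪_{i=1}^∞ Z_i ⊇ Z }`. -/
noncomputable def packingMeasureEps (T : X → X) (s ε : ℝ) (Z : Set X) : ℝ≥0∞ :=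
  ⨅ (Zs : ℕ → Set X) (_ : Z ⊆ ⋃ i, Zs i), ∑' i, packingPre T s ε (Zs i)

/-- `h^P(Z, ε)`: the critical value of `s ≥ 0` at which `𝒫^s_ε(Z)` jumps from `∞` to `0`. -/
noncomputable def packingEntropyEps (T : X → X) (ε : ℝ) (Z : Set X) : ℝ≥0∞ :=
  ⨅ (s : ℝ≥0) (_ : packingMeasureEps T (s : ℝ) ε Z = 0), (s : ℝ≥0∞)

/-- The packing topological entropy `h^P(Z) = lim_{ε → 0} h^P(Z, ε)`; the limit exists and
equals the supremum since `h^P(Z,ε)` increases as `ε` decreases. -/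
noncomputable def packingEntropy (T : X → X) (Z : Set X) : ℝ≥0∞ :=
  ⨆ (ε : ℝ) (_ : 0 < ε), packingEntropyEps T ε Z

/-- `r_n(Z, ε)`: the largest cardinality of an `(n,ε)`-separated subset `E ⊆ Z`, i.e. a set in
which distinct points are at Bowen `d_n`-distance `> ε`. -/
noncomputable def maxSep (T : X → X) (Z : Set X) (n : ℕ) (ε : ℝ) : ℕ :=
  sSup {k : ℕ | ∃ E : Finset X, ↑E ⊆ Z ∧
    (∀ x ∈ E, ∀ y ∈ E, x ≠ y → ∃ i < n, ε < dist (T^[i] x) (T^[i] y)) ∧ E.card = k}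

/-- The upper capacity topological entropy
`h^U(Z) = lim_{ε → 0} limsup_{n → ∞} (1/n) log r_n(Z, ε)`; the limit over `ε` equals the
supremum by monotonicity. -/
noncomputable def upperCapacityEntropy (T : X → X) (Z : Set X) : ℝ≥0∞ :=
  ⨆ (ε : ℝ) (_ : 0 < ε),
    Filter.atTop.limsup fun n : ℕ => ENNReal.ofReal (Real.log (maxSep T Z n ε) / n)

end BowenProduct
namespace BowenProduct

variable {X : Type*} [PseudoMetricSpace X]

private lemma packingSum_anti (T : X → X) {s s' : ℝ} (h : s ≤ s') (N : ℕ) (ε : ℝ) (Z : Set X) :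
    packingSum T s' N ε Z ≤ packingSum T s N ε Z := by
  refine iSup_le fun F => iSup_le fun hc => iSup_le fun hm => iSup_le fun hd => ?_
  have h1 : (∑' p : F, ENNReal.ofReal (Real.exp (-s' * ((p : X × ℕ).2 : ℝ))))
      ≤ ∑' p : F, ENNReal.ofReal (Real.exp (-s * ((p : X × ℕ).2 : ℝ))) := by
    refine ENNReal.tsum_le_tsum fun p => ENNReal.ofReal_le_ofReal (Real.exp_le_exp.mpr ?_)
    have h0 : (0:ℝ) ≤ (((p : X × ℕ).2 : ℕ) : ℝ) := Nat.cast_nonneg _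
    nlinarith
  exact h1.trans (le_iSup_of_le F <| le_iSup_of_le hc <| le_iSup_of_le hm <|
    le_iSup_of_le hd le_rfl)

private lemma count_le (T : X → X) {A : Set X} {η s₁ : ℝ} {N n : ℕ} (hn : N ≤ n)
    {E : Finset X} (hE : ↑E ⊆ A)
    (hsep : ∀ x ∈ E, ∀ y ∈ E, x ≠ y → ∃ k < n, 2 * η < dist (T^[k] x) (T^[k] y)) :
    (E.card : ℝ≥0∞) * ENNReal.ofReal (Real.exp (-s₁ * n)) ≤ packingSum T s₁ N η A := by
  classical
  set F : Finset (X × ℕ) := E.image (fun x => (x, n)) with hFdef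
  have key : (∑' p : (↑F : Set (X × ℕ)), ENNReal.ofReal (Real.exp (-s₁ * ((p : X × ℕ).2 : ℝ))))
      = (E.card : ℝ≥0∞) * ENNReal.ofReal (Real.exp (-s₁ * n)) := by
    rw [Finset.tsum_subtype' F (fun p => ENNReal.ofReal (Real.exp (-s₁ * (p.2 : ℝ))))]
    rw [hFdef, Finset.sum_image (fun a _ b _ h => (Prod.mk.injEq _ _ _ _ ▸ h : _ ∧ _).1)]
    simp [Finset.sum_const, nsmul_eq_mul]
  have hcnt : (↑F : Set (X × ℕ)).Countable := F.countable_toSet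
  have hmem : ∀ p ∈ (↑F : Set (X × ℕ)), p.1 ∈ A ∧ N ≤ p.2 := by
    intro p hp
    obtain ⟨x, hx, rfl⟩ := Finset.mem_image.mp hp
    exact ⟨hE hx, hn⟩
  have hdis : (↑F : Set (X × ℕ)).PairwiseDisjoint
      fun p => bowenClosedBall T p.2 p.1 η := by
    intro p hp q hq hne
    obtain ⟨x, hx, rfl⟩ := Finset.mem_image.mp hp
    obtain ⟨y, hy, rfl⟩ := Finset.mem_image.mp hq
    have hxy : x ≠ y := fun h => hne (by rw [h])
    obtain ⟨k, hk, hgt⟩ := hsep x hx y hy hxy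
    refine Set.disjoint_left.mpr fun z hz hz' => ?_
    have h1 : dist (T^[k] x) (T^[k] z) ≤ η := hz k hk
    have h2 : dist (T^[k] y) (T^[k] z) ≤ η := hz' k hk
    have := dist_triangle (T^[k] x) (T^[k] z) (T^[k] y)
    rw [dist_comm (T^[k] z) (T^[k] y)] at this
    linarith
  rw [← key]
  exact le_iSup_of_le (↑F) <| le_iSup_of_le hcnt <| le_iSup_of_le hmem <|
    le_iSup_of_le hdis le_rfl

private lemma exists_maximal_sep (T : X → X) (n : ℕ) {r : ℝ} (hr : 0 ≤ r) (S : Finset X) :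
    ∃ E : Finset X, E ⊆ S ∧
      (∀ x ∈ E, ∀ y ∈ E, x ≠ y → ∃ k < n, r < dist (T^[k] x) (T^[k] y)) ∧
      (∀ x ∈ S, ∃ e ∈ E, ∀ k < n, dist (T^[k] e) (T^[k] x) ≤ r) := by
  classical
  set P : Finset X → Prop := fun E => E ⊆ S ∧
    ∀ x ∈ E, ∀ y ∈ E, x ≠ y → ∃ k < n, r < dist (T^[k] x) (T^[k] y) with hPdef
  have h𝒮 : ((S.powerset.filter P)).Nonempty :=
    ⟨∅, by simp [hPdef]⟩
  obtain ⟨E, hE, hmax⟩ := Finset.exists_max_image (S.powerset.filter P) Finset.card h𝒮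
  rw [Finset.mem_filter, Finset.mem_powerset] at hE
  refine ⟨E, hE.1, hE.2.2, fun x hx => ?_⟩
  by_contra hcon
  push_neg at hcon
  have hxE : x ∉ E := by
    intro hxe
    obtain ⟨k, hk, hgt⟩ := hcon x hxe
    rw [dist_self] at hgt
    linarith
  have hmem : insert x E ∈ S.powerset.filter P := by
    rw [Finset.mem_filter, Finset.mem_powerset]
    refine ⟨Finset.insert_subset hx hE.2.1, Finset.insert_subset hx hE.2.1, ?_⟩
    intro a ha b hb hab
    rcases Finset.mem_insert.mp ha with ha' | ha'
    · rcases Finset.mem_insert.mp hb with hb' | hb'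
      · exact absurd (ha'.trans hb'.symm) hab
      · subst ha'
        obtain ⟨k, hk, hgt⟩ := hcon b hb'
        exact ⟨k, hk, by rwa [dist_comm] at hgt⟩
    · rcases Finset.mem_insert.mp hb with hb' | hb'
      · subst hb'
        exact hcon a ha'
      · exact hE.2.2 a ha' b hb' hab
  have := hmax _ hmem
  rw [Finset.card_insert_of_notMem hxE] at this
  omega

private lemma prod_sep_card (T : X → X) {A B : Set X} {ε : ℝ} (hε : 0 < ε) {n : ℕ}
    {S : Finset (X × X)} (hS : ↑S ⊆ A ×ˢ B)
    (hsep : ∀ p ∈ S, ∀ q ∈ S, p ≠ q →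
      ∃ k < n, ε < dist ((Prod.map T T)^[k] p) ((Prod.map T T)^[k] q)) :
    ∃ E₁ E₂ : Finset X, ↑E₁ ⊆ A ∧ ↑E₂ ⊆ B ∧
      (∀ x ∈ E₁, ∀ y ∈ E₁, x ≠ y → ∃ k < n, 2 * (ε/8) < dist (T^[k] x) (T^[k] y)) ∧
      (∀ x ∈ E₂, ∀ y ∈ E₂, x ≠ y → ∃ k < n, 2 * (ε/8) < dist (T^[k] x) (T^[k] y)) ∧
      S.card ≤ E₁.card * E₂.card := by
  classical
  have hr : (0:ℝ) ≤ 2 * (ε/8) := by linarith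
  obtain ⟨E₁, hE₁S, hE₁sep, hE₁span⟩ := exists_maximal_sep T n hr (S.image Prod.fst)
  obtain ⟨E₂, hE₂S, hE₂sep, hE₂span⟩ := exists_maximal_sep T n hr (S.image Prod.snd)
  have hE₁A : ↑E₁ ⊆ A := by
    intro x hx
    obtain ⟨p, hp, rfl⟩ := Finset.mem_image.mp (hE₁S hx)
    exact (hS hp).1
  have hE₂B : ↑E₂ ⊆ B := by
    intro x hx
    obtain ⟨p, hp, rfl⟩ := Finset.mem_image.mp (hE₂S hx)
    exact (hS hp).2
  have span₁ : ∀ x : X, ∃ e : X, x ∈ S.image Prod.fst →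
      e ∈ E₁ ∧ ∀ k < n, dist (T^[k] e) (T^[k] x) ≤ 2 * (ε/8) := by
    intro x
    by_cases h : x ∈ S.image Prod.fst
    · obtain ⟨e, he, hd⟩ := hE₁span x h
      exact ⟨e, fun _ => ⟨he, hd⟩⟩
    · exact ⟨x, fun hx => absurd hx h⟩
  have span₂ : ∀ x : X, ∃ e : X, x ∈ S.image Prod.snd →
      e ∈ E₂ ∧ ∀ k < n, dist (T^[k] e) (T^[k] x) ≤ 2 * (ε/8) := by
    intro x
    by_cases h : x ∈ S.image Prod.snd
    · obtain ⟨e, he, hd⟩ := hE₂span x h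
      exact ⟨e, fun _ => ⟨he, hd⟩⟩
    · exact ⟨x, fun hx => absurd hx h⟩
  choose g₁ hg₁ using span₁
  choose g₂ hg₂ using span₂
  refine ⟨E₁, E₂, hE₁A, hE₂B, hE₁sep, hE₂sep, ?_⟩
  have hmaps : ∀ p ∈ S, (g₁ p.1, g₂ p.2) ∈ E₁ ×ˢ E₂ := by
    intro p hp
    rw [Finset.mem_product]
    exact ⟨(hg₁ p.1 (Finset.mem_image_of_mem Prod.fst hp)).1,
      (hg₂ p.2 (Finset.mem_image_of_mem Prod.snd hp)).1⟩
  have hinj : Set.InjOn (fun p : X × X => (g₁ p.1, g₂ p.2)) ↑S := by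
    intro p hp q hq hpq
    by_contra hne
    obtain ⟨k, hk, hgt⟩ := hsep p hp q hq hne
    have hgt' : ε < max (dist (T^[k] p.1) (T^[k] q.1)) (dist (T^[k] p.2) (T^[k] q.2)) := by
      simpa [Prod.map_iterate, Prod.dist_eq] using hgt
    have hgeq : g₁ p.1 = g₁ q.1 ∧ g₂ p.2 = g₂ q.2 := by
      constructor
      · exact congrArg Prod.fst hpq
      · exact congrArg Prod.snd hpq
    have h1p := (hg₁ p.1 (Finset.mem_image_of_mem Prod.fst hp)).2 k hk
    have h1q := (hg₁ q.1 (Finset.mem_image_of_mem Prod.fst hq)).2 k hk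
    have h2p := (hg₂ p.2 (Finset.mem_image_of_mem Prod.snd hp)).2 k hk
    have h2q := (hg₂ q.2 (Finset.mem_image_of_mem Prod.snd hq)).2 k hk
    rw [hgeq.1] at h1p
    rw [hgeq.2] at h2p
    have hd1 : dist (T^[k] p.1) (T^[k] q.1) ≤ ε / 2 := by
      have := dist_triangle (T^[k] p.1) (T^[k] (g₁ q.1)) (T^[k] q.1)
      rw [dist_comm (T^[k] p.1) (T^[k] (g₁ q.1))] at this
      linarith
    have hd2 : dist (T^[k] p.2) (T^[k] q.2) ≤ ε / 2 := by
      have := dist_triangle (T^[k] p.2) (T^[k] (g₂ q.2)) (T^[k] q.2)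
      rw [dist_comm (T^[k] p.2) (T^[k] (g₂ q.2))] at this
      linarith
    have := max_le hd1 hd2
    linarith
  have := Finset.card_le_card_of_injOn _ hmaps hinj
  simpa [Finset.card_product] using this

private lemma prod_packingSum_le (T : X → X) {A B : Set X} {ε : ℝ} (hε : 0 < ε)
    {s₁ s₂ δ : ℝ} {N₁ N₂ N : ℕ} (hN1 : N₁ ≤ N) (hN2 : N₂ ≤ N) :
    packingSum (Prod.map T T) (s₁ + s₂ + δ) N ε (A ×ˢ B) ≤
      (packingSum T s₁ N₁ (ε/8) A * packingSum T s₂ N₂ (ε/8) B *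
        (1 - ENNReal.ofReal (Real.exp (-δ)))⁻¹) * (ENNReal.ofReal (Real.exp (-δ))) ^ N := by
  classical
  set r : ℝ≥0∞ := ENNReal.ofReal (Real.exp (-δ)) with hrdef
  set C₁ := packingSum T s₁ N₁ (ε/8) A with hC₁def
  set C₂ := packingSum T s₂ N₂ (ε/8) B with hC₂def
  refine iSup_le fun F => iSup_le fun hcnt => iSup_le fun hmem => iSup_le fun hdis => ?_
  rw [ENNReal.tsum_eq_iSup_sum]
  refine iSup_le fun G => ?_
  set f : (X × X) × ℕ → ℝ≥0∞ :=
    fun p => ENNReal.ofReal (Real.exp (-(s₁ + s₂ + δ) * (p.2 : ℝ))) with hfdef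
  set G' : Finset ((X × X) × ℕ) := G.image Subtype.val with hG'def
  have hG'F : ∀ p ∈ G', p ∈ F := by
    intro p hp
    obtain ⟨q, _, rfl⟩ := Finset.mem_image.mp hp
    exact q.2
  have hGsum : ∑ p ∈ G, f ↑p = ∑ p ∈ G', f p := by
    rw [hG'def]
    exact (Finset.sum_image (fun a _ b _ h => Subtype.ext h)).symm
  rw [show (∑ p ∈ G, ENNReal.ofReal (Real.exp (-(s₁ + s₂ + δ) * (((p : (X × X) × ℕ)).2 : ℝ))))
      = ∑ p ∈ G, f ↑p from rfl, hGsum]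
  set J : Finset ℕ := G'.image Prod.snd with hJdef
  rw [← Finset.sum_fiberwise_of_maps_to (fun p hp => Finset.mem_image_of_mem Prod.snd hp) f]
  have hNJ : ∀ n ∈ J, N ≤ n := by
    intro n hn
    obtain ⟨p, hp, rfl⟩ := Finset.mem_image.mp hn
    exact (hmem p (hG'F p hp)).2
  have hterm : ∀ n ∈ J, (∑ p ∈ G'.filter (fun p => p.2 = n), f p) ≤ C₁ * C₂ * r ^ n := by
    intro n hn
    have hnN : N ≤ n := hNJ n hn
    set Gn := G'.filter (fun p => p.2 = n) with hGndef
    have hsum : (∑ p ∈ Gn, f p)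
        = (Gn.card : ℝ≥0∞) * ENNReal.ofReal (Real.exp (-(s₁ + s₂ + δ) * (n : ℝ))) := by
      rw [Finset.sum_congr rfl (fun p hp => ?_), Finset.sum_const, nsmul_eq_mul]
      have h2 := (Finset.mem_filter.mp hp).2
      simp only [hfdef, h2]
    set Sn : Finset (X × X) := Gn.image Prod.fst with hSndef
    have hinj : Set.InjOn (Prod.fst : (X × X) × ℕ → X × X) ↑Gn := by
      intro p hp q hq hpq
      have hp2 := (Finset.mem_filter.mp hp).2
      have hq2 := (Finset.mem_filter.mp hq).2
      exact Prod.ext hpq (hp2.trans hq2.symm)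
    have hcard : Sn.card = Gn.card := Finset.card_image_of_injOn hinj
    have hmemF : ∀ x ∈ Sn, (x, n) ∈ F := by
      intro x hx
      obtain ⟨p, hp, rfl⟩ := Finset.mem_image.mp hx
      have hp2 := (Finset.mem_filter.mp hp).2
      have : p = (p.1, n) := Prod.ext rfl hp2
      rw [← this]
      exact hG'F p (Finset.mem_of_mem_filter p hp)
    have hSnAB : ↑Sn ⊆ A ×ˢ B := by
      intro x hx
      have hx' : x ∈ Sn := hx
      exact (hmem (x, n) (hmemF x hx')).1
    have hSnsep : ∀ p ∈ Sn, ∀ q ∈ Sn, p ≠ q →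
        ∃ k < n, ε < dist ((Prod.map T T)^[k] p) ((Prod.map T T)^[k] q) := by
      intro p hp q hq hne
      have hne' : (p, n) ≠ (q, n) := fun h => hne (congrArg Prod.fst h)
      have hd := hdis (hmemF p hp) (hmemF q hq) hne'
      have hq_self : q ∈ bowenClosedBall (Prod.map T T) n q ε := by
        simp only [bowenClosedBall, Set.mem_setOf_eq]
        intro k _
        rw [dist_self]
        exact hε.le
      have hq_not : q ∉ bowenClosedBall (Prod.map T T) n p ε :=
        Set.disjoint_right.mp hd hq_self
      simp only [bowenClosedBall, Set.mem_setOf_eq, not_forall] at hq_not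
      obtain ⟨k, hk, hgt⟩ := hq_not
      exact ⟨k, hk, lt_of_not_ge hgt⟩
    obtain ⟨E₁, E₂, hE₁A, hE₂B, hsep₁, hsep₂, hcard2⟩ := prod_sep_card T hε hSnAB hSnsep
    have hc₁ : (E₁.card : ℝ≥0∞) * ENNReal.ofReal (Real.exp (-s₁ * n)) ≤ C₁ :=
      count_le T (hN1.trans hnN) hE₁A hsep₁
    have hc₂ : (E₂.card : ℝ≥0∞) * ENNReal.ofReal (Real.exp (-s₂ * n)) ≤ C₂ :=
      count_le T (hN2.trans hnN) hE₂B hsep₂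
    have hsplit : ENNReal.ofReal (Real.exp (-(s₁ + s₂ + δ) * (n : ℝ)))
        = ENNReal.ofReal (Real.exp (-s₁ * n)) * ENNReal.ofReal (Real.exp (-s₂ * n)) * r ^ n := by
      have hmerge : ENNReal.ofReal (Real.exp (-s₁ * n)) * ENNReal.ofReal (Real.exp (-s₂ * n)) * r ^ n
          = ENNReal.ofReal (Real.exp (-s₁ * n) * Real.exp (-s₂ * n) * Real.exp (-δ) ^ n) := by
        rw [hrdef, ← ENNReal.ofReal_pow (Real.exp_pos _).le,
          ← ENNReal.ofReal_mul (Real.exp_pos _).le,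
          ← ENNReal.ofReal_mul (mul_nonneg (Real.exp_pos _).le (Real.exp_pos _).le)]
      rw [hmerge, ← Real.exp_nat_mul, ← Real.exp_add, ← Real.exp_add]
      congr 1
      ring
    have hcardle : (Gn.card : ℝ≥0∞) ≤ (E₁.card : ℝ≥0∞) * (E₂.card : ℝ≥0∞) := by
      rw [← hcard]
      exact_mod_cast hcard2
    calc (∑ p ∈ Gn, f p)
        = (Gn.card : ℝ≥0∞) * ENNReal.ofReal (Real.exp (-(s₁ + s₂ + δ) * (n : ℝ))) := hsum
      _ ≤ ((E₁.card : ℝ≥0∞) * (E₂.card : ℝ≥0∞)) *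
            (ENNReal.ofReal (Real.exp (-s₁ * n)) * ENNReal.ofReal (Real.exp (-s₂ * n)) * r ^ n) := by
          rw [hsplit]; exact mul_le_mul' hcardle le_rfl
      _ = ((E₁.card : ℝ≥0∞) * ENNReal.ofReal (Real.exp (-s₁ * n))) *
            ((E₂.card : ℝ≥0∞) * ENNReal.ofReal (Real.exp (-s₂ * n))) * r ^ n := by ring
      _ ≤ C₁ * C₂ * r ^ n := mul_le_mul' (mul_le_mul' hc₁ hc₂) le_rfl
  refine le_trans (Finset.sum_le_sum hterm) ?_
  have hfac : ∀ n ∈ J, C₁ * C₂ * r ^ n = (C₁ * C₂ * r ^ N) * r ^ (n - N) := by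
    intro n hn
    have hpow : r ^ n = r ^ N * r ^ (n - N) := by
      rw [← pow_add, Nat.add_sub_cancel' (hNJ n hn)]
    rw [hpow, ← mul_assoc]
  rw [Finset.sum_congr rfl hfac, ← Finset.mul_sum]
  have hsub : (∑ n ∈ J, r ^ (n - N)) ≤ (1 - r)⁻¹ := by
    have hinj : ∀ a ∈ J, ∀ b ∈ J, a - N = b - N → a = b := by
      intro a ha b hb h
      have := hNJ a ha
      have := hNJ b hb
      omega
    have himg := Finset.sum_image (s := J) (f := fun m : ℕ => r ^ m) (g := fun n => n - N) hinj
    rw [← himg]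
    refine le_trans (ENNReal.sum_le_tsum _) ?_
    rw [ENNReal.tsum_geometric]
  calc (C₁ * C₂ * r ^ N) * ∑ n ∈ J, r ^ (n - N)
      ≤ (C₁ * C₂ * r ^ N) * (1 - r)⁻¹ := mul_le_mul' le_rfl hsub
    _ = (C₁ * C₂ * (1 - r)⁻¹) * r ^ N := by ring

private lemma packingMeasureEps_anti (T : X → X) {s s' : ℝ} (h : s ≤ s') (ε : ℝ) (Z : Set X) :
    packingMeasureEps T s' ε Z ≤ packingMeasureEps T s ε Z := by
  refine iInf_mono fun Zs => iInf_mono fun _ => ENNReal.tsum_le_tsum fun i =>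
    iInf_mono fun N => packingSum_anti T h N ε _

private lemma prod_packingPre_zero (T : X → X) {A B : Set X} {ε : ℝ} (hε : 0 < ε)
    {s₁ s₂ δ : ℝ} (hδ : 0 < δ)
    (hA : packingPre T s₁ (ε/8) A < ⊤) (hB : packingPre T s₂ (ε/8) B < ⊤) :
    packingPre (Prod.map T T) (s₁ + s₂ + δ) ε (A ×ˢ B) = 0 := by
  obtain ⟨N₁, hN₁⟩ : ∃ N, packingSum T s₁ N (ε/8) A < ⊤ := by
    rw [packingPre, iInf_lt_iff] at hA; exact hA
  obtain ⟨N₂, hN₂⟩ : ∃ N, packingSum T s₂ N (ε/8) B < ⊤ := by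
    rw [packingPre, iInf_lt_iff] at hB; exact hB
  set r : ℝ≥0∞ := ENNReal.ofReal (Real.exp (-δ)) with hrdef
  have hr1 : r < 1 := by
    rw [hrdef, ← ENNReal.ofReal_one]
    refine (ENNReal.ofReal_lt_ofReal_iff one_pos).mpr ?_
    simpa using Real.exp_lt_exp.mpr (neg_lt_zero.mpr hδ)
  set K : ℝ≥0∞ := packingSum T s₁ N₁ (ε/8) A * packingSum T s₂ N₂ (ε/8) B * (1 - r)⁻¹ with hKdef
  have hK : K ≠ ⊤ := by
    refine ENNReal.mul_ne_top (ENNReal.mul_ne_top hN₁.ne hN₂.ne) ?_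
    rw [Ne, ENNReal.inv_eq_top]
    exact (tsub_pos_iff_lt.mpr hr1).ne'
  have hb : ∀ M, N₁ ⊔ N₂ ≤ M → packingPre (Prod.map T T) (s₁ + s₂ + δ) ε (A ×ˢ B) ≤ K * r ^ M := by
    intro M hM
    exact (iInf_le _ M).trans
      (prod_packingSum_le T hε (le_trans le_sup_left hM) (le_trans le_sup_right hM))
  have htend : Tendsto (fun M : ℕ => K * r ^ M) atTop (nhds 0) := by
    have := ENNReal.Tendsto.const_mul (a := K)
      (ENNReal.tendsto_pow_atTop_nhds_zero_of_lt_one hr1) (Or.inr hK)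
    simpa using this
  exact le_antisymm (ge_of_tendsto htend (Filter.eventually_atTop.mpr ⟨N₁ ⊔ N₂, hb⟩)) zero_le

private lemma prod_measure_zero (T : X → X) {Z₁ Z₂ : Set X} {ε : ℝ} (hε : 0 < ε)
    {s₁ s₂ δ : ℝ} (hδ : 0 < δ)
    (h₁ : packingMeasureEps T s₁ (ε/8) Z₁ = 0) (h₂ : packingMeasureEps T s₂ (ε/8) Z₂ = 0) :
    packingMeasureEps (Prod.map T T) (s₁ + s₂ + δ) ε (Z₁ ×ˢ Z₂) = 0 := by
  obtain ⟨A, hAcov, hAsum⟩ : ∃ A : ℕ → Set X, Z₁ ⊆ ⋃ i, A i ∧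
      ∑' i, packingPre T s₁ (ε/8) (A i) < ⊤ := by
    have h : packingMeasureEps T s₁ (ε/8) Z₁ < ⊤ := by rw [h₁]; exact ENNReal.zero_lt_top 
    rw [packingMeasureEps, iInf_lt_iff] at h
    obtain ⟨A, hA⟩ := h
    rw [iInf_lt_iff] at hA
    obtain ⟨hc, hs⟩ := hA
    exact ⟨A, hc, hs⟩
  obtain ⟨B, hBcov, hBsum⟩ : ∃ B : ℕ → Set X, Z₂ ⊆ ⋃ i, B i ∧
      ∑' i, packingPre T s₂ (ε/8) (B i) < ⊤ := by
    have h : packingMeasureEps T s₂ (ε/8) Z₂ < ⊤ := by rw [h₂]; exact ENNReal.zero_lt_top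
    rw [packingMeasureEps, iInf_lt_iff] at h
    obtain ⟨B, hB⟩ := h
    rw [iInf_lt_iff] at hB
    obtain ⟨hc, hs⟩ := hB
    exact ⟨B, hc, hs⟩
  have hpre : ∀ j k : ℕ, packingPre (Prod.map T T) (s₁ + s₂ + δ) ε (A j ×ˢ B k) = 0 :=
    fun j k => prod_packingPre_zero T hε hδ
      (lt_of_le_of_lt (ENNReal.le_tsum j) hAsum) (lt_of_le_of_lt (ENNReal.le_tsum k) hBsum)
  set e : ℕ ≃ ℕ × ℕ := (Denumerable.eqv (ℕ × ℕ)).symm with hedef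
  have hcov : Z₁ ×ˢ Z₂ ⊆ ⋃ i, (A (e i).1 ×ˢ B (e i).2) := by
    intro p hp
    obtain ⟨hx, hy⟩ := hp
    obtain ⟨j, hj⟩ := Set.mem_iUnion.mp (hAcov hx)
    obtain ⟨k, hk⟩ := Set.mem_iUnion.mp (hBcov hy)
    refine Set.mem_iUnion.mpr ⟨e.symm (j, k), ?_⟩
    constructor
    · simpa [Equiv.apply_symm_apply] using hj
    · simpa [Equiv.apply_symm_apply] using hk
  refine le_antisymm ?_ zero_le
  refine le_trans (iInf₂_le (fun i => A (e i).1 ×ˢ B (e i).2) hcov) ?_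
  simp [hpre]

private lemma measure_zero_of_lt (T : X → X) {ε : ℝ} {Z : Set X} {s : ℝ≥0}
    (h : packingEntropyEps T ε Z < (s : ℝ≥0∞)) : packingMeasureEps T (s : ℝ) ε Z = 0 := by
  rw [packingEntropyEps, iInf_lt_iff] at h
  obtain ⟨s', hs'⟩ := h
  rw [iInf_lt_iff] at hs'
  obtain ⟨hz, hlt⟩ := hs'
  have hle : (s' : ℝ) ≤ (s : ℝ) := by exact_mod_cast (ENNReal.coe_lt_coe.mp hlt).le
  exact le_antisymm (le_trans (packingMeasureEps_anti T hle ε Z) hz.le) zero_le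

end BowenProduct

/-- Subadditivity of packing entropy under products: `h^P(Z_1 × Z_2) ≤ h^P(Z_1) + h^P(Z_2)`,
the product being taken in the product system `(X × X, ρ, T × T)` with `ρ` the max product
metric. -/
theorem BowenProduct.packingEntropy_prod_le {X : Type*} [MetricSpace X] [CompactSpace X]
    (T : X → X) (hT : Continuous T) (Z₁ Z₂ : Set X) :
    BowenProduct.packingEntropy (Prod.map T T) (Z₁ ×ˢ Z₂) ≤
      BowenProduct.packingEntropy T Z₁ + BowenProduct.packingEntropy T Z₂ := by
  classical
  refine ENNReal.le_of_forall_pos_le_add fun δ hδ hfin => ?_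
  have ha₁ : packingEntropy T Z₁ ≠ ⊤ := (lt_of_le_of_lt le_self_add hfin).ne
  have ha₂ : packingEntropy T Z₂ ≠ ⊤ := (lt_of_le_of_lt le_add_self hfin).ne
  have hδ3 : 0 < δ / 3 := by positivity
  set s₁ : ℝ≥0 := (packingEntropy T Z₁).toNNReal + δ / 3 with hs₁def
  set s₂ : ℝ≥0 := (packingEntropy T Z₂).toNNReal + δ / 3 with hs₂def
  have hlt₁ : packingEntropy T Z₁ < (s₁ : ℝ≥0∞) := by
    conv_lhs => rw [← ENNReal.coe_toNNReal ha₁]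
    exact_mod_cast lt_add_of_pos_right _ hδ3
  have hlt₂ : packingEntropy T Z₂ < (s₂ : ℝ≥0∞) := by
    conv_lhs => rw [← ENNReal.coe_toNNReal ha₂]
    exact_mod_cast lt_add_of_pos_right _ hδ3
  show (⨆ (ε : ℝ) (_ : 0 < ε), packingEntropyEps (Prod.map T T) ε (Z₁ ×ˢ Z₂)) ≤ _
  refine iSup_le fun ε => iSup_le fun hε => ?_
  have he₁ : packingEntropyEps T (ε / 8) Z₁ < (s₁ : ℝ≥0∞) :=
    lt_of_le_of_lt
      (le_iSup₂ (f := fun (ε : ℝ) (_ : 0 < ε) => packingEntropyEps T ε Z₁) (ε / 8)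
        (by positivity)) hlt₁
  have he₂ : packingEntropyEps T (ε / 8) Z₂ < (s₂ : ℝ≥0∞) :=
    lt_of_le_of_lt
      (le_iSup₂ (f := fun (ε : ℝ) (_ : 0 < ε) => packingEntropyEps T ε Z₂) (ε / 8)
        (by positivity)) hlt₂
  have hm₁ : packingMeasureEps T (s₁ : ℝ) (ε / 8) Z₁ = 0 := measure_zero_of_lt T he₁
  have hm₂ : packingMeasureEps T (s₂ : ℝ) (ε / 8) Z₂ = 0 := measure_zero_of_lt T he₂
  have hδ3' : (0 : ℝ) < ((δ / 3 : ℝ≥0) : ℝ) := by exact_mod_cast hδ3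
  have key := prod_measure_zero T hε hδ3' hm₁ hm₂
  have hcast : ((s₁ + s₂ + δ / 3 : ℝ≥0) : ℝ) = (s₁ : ℝ) + (s₂ : ℝ) + ((δ / 3 : ℝ≥0) : ℝ) := by
    push_cast; ring
  have hent : packingEntropyEps (Prod.map T T) ε (Z₁ ×ˢ Z₂) ≤
      ((s₁ + s₂ + δ / 3 : ℝ≥0) : ℝ≥0∞) := by
    refine iInf₂_le (s₁ + s₂ + δ / 3) ?_
    rw [hcast]
    exact key
  refine hent.trans ?_
  have hN : (s₁ + s₂ + δ / 3 : ℝ≥0)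
      = (packingEntropy T Z₁).toNNReal + (packingEntropy T Z₂).toNNReal + δ := by
    rw [hs₁def, hs₂def]
    apply NNReal.coe_injective
    push_cast
    ring
  rw [hN, ENNReal.coe_add, ENNReal.coe_add, ENNReal.coe_toNNReal ha₁, ENNReal.coe_toNNReal ha₂]
end

section
/- Subadditivity of packing entropy for products of two different systems: let (X_1,d_1,T_1) and (X_2,d_2,T_2) be topological dynamical systems. For any Z_1 ⊆ X_1 and Z_2 ⊆ X_2, h^P(Z_1 × Z_2) ≤ h^P(Z_1) + h^P(Z_2), where the product is taken in the system (X_1×X_2, ρ, T_1×T_2). -/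
open Filter Set
open scoped ENNReal NNReal

namespace BowenProduct

variable {X : Type*} [PseudoMetricSpace X]

lemma card_mul_le_packingSum (T : X → X) (s : ℝ) (N n : ℕ) (ε : ℝ)
    (A : Set X) (E : Finset X) (hE : ↑E ⊆ A) (hn : N ≤ n)
    (hsep : ∀ x ∈ E, ∀ y ∈ E, x ≠ y → ∃ i < n, 2 * ε < dist (T^[i] x) (T^[i] y)) :
    (E.card : ℝ≥0∞) * ENNReal.ofReal (Real.exp (-s * n)) ≤ packingSum T s N ε A := by
  classical
  set F : Set (X × ℕ) := ↑(E.image fun x => (x, n)) with hF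
  have hcount : F.Countable := (E.image fun x => (x, n)).countable_toSet
  have hmem : ∀ p ∈ F, p.1 ∈ A ∧ N ≤ p.2 := by
    intro p hp
    simp only [hF, Finset.coe_image, Set.mem_image, Finset.mem_coe] at hp
    obtain ⟨x, hx, rfl⟩ := hp
    exact ⟨hE hx, hn⟩
  have hdisj : F.PairwiseDisjoint fun p => bowenClosedBall T p.2 p.1 ε := by
    intro p hp q hq hpq
    simp only [hF, Finset.coe_image, Set.mem_image, Finset.mem_coe] at hp hq
    obtain ⟨x, hx, rfl⟩ := hp
    obtain ⟨y, hy, rfl⟩ := hq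
    have hxy : x ≠ y := fun h => hpq (by rw [h])
    obtain ⟨i, hi, hdist⟩ := hsep x hx y hy hxy
    refine Set.disjoint_left.2 fun z hzx hzy => ?_
    have h1 := hzx i hi
    have h2 := hzy i hi
    have h3 := dist_triangle_right (T^[i] x) (T^[i] y) (T^[i] z)
    simp only at h1 h2
    linarith
  have hsum : (∑' p : F, ENNReal.ofReal (Real.exp (-s * ((p : X × ℕ).2 : ℝ))))
      = (E.card : ℝ≥0∞) * ENNReal.ofReal (Real.exp (-s * n)) := by
    rw [hF]
    rw [Finset.tsum_subtype' (E.image fun x => (x, n))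
      (fun p => ENNReal.ofReal (Real.exp (-s * (p.2 : ℝ))))]
    rw [Finset.sum_image (by intro x _ y _ h; exact congrArg Prod.fst h)]
    simp [Finset.sum_const, nsmul_eq_mul]
  rw [← hsum]
  exact le_iSup_of_le F <| le_iSup_of_le hcount <| le_iSup_of_le hmem <| le_iSup_of_le hdisj le_rfl


lemma exists_maximal_separated (T : X → X) (n : ℕ) {β : ℝ} (hβ : 0 ≤ β) (P : Finset X) :
    ∃ Q, Q ⊆ P ∧ (∀ x ∈ Q, ∀ y ∈ Q, x ≠ y → ∃ i < n, β < dist (T^[i] x) (T^[i] y)) ∧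
      ∀ a ∈ P, ∃ x ∈ Q, ∀ i < n, dist (T^[i] a) (T^[i] x) ≤ β := by
  classical
  set sep : Finset X → Prop :=
    fun Q => ∀ x ∈ Q, ∀ y ∈ Q, x ≠ y → ∃ i < n, β < dist (T^[i] x) (T^[i] y) with hsepdef
  have hS : (P.powerset.filter sep).Nonempty :=
    ⟨∅, by simp [hsepdef]⟩
  obtain ⟨Q, hQmem, hQmax⟩ := Finset.exists_max_image (P.powerset.filter sep) Finset.card hS
  rw [Finset.mem_filter, Finset.mem_powerset] at hQmem
  refine ⟨Q, hQmem.1, hQmem.2, fun a ha => ?_⟩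
  by_contra hcon
  push_neg at hcon
  have h : ∀ x ∈ Q, ∃ i < n, β < dist (T^[i] a) (T^[i] x) := hcon
  have haQ : a ∉ Q := by
    intro haQ
    obtain ⟨i, hi, hlt⟩ := h a haQ
    simp only [dist_self] at hlt
    linarith
  have hsep' : sep (insert a Q) := by
    intro x hx y hy hxy
    rcases Finset.mem_insert.1 hx with hx1 | hx1
    · rcases Finset.mem_insert.1 hy with hy1 | hy1
      · exact absurd (hx1.trans hy1.symm) hxy
      · subst hx1; exact h y hy1
    · rcases Finset.mem_insert.1 hy with hy1 | hy1
      · subst hy1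
        obtain ⟨i, hi, hd⟩ := h x hx1
        exact ⟨i, hi, by rwa [dist_comm]⟩
      · exact hQmem.2 x hx1 y hy1 hxy
  have hle : (insert a Q).card ≤ Q.card :=
    hQmax _ (Finset.mem_filter.2
      ⟨Finset.mem_powerset.2 (Finset.insert_subset ha hQmem.1), hsep'⟩)
  rw [Finset.card_insert_of_notMem haQ] at hle
  omega

lemma product_separated {X₁ X₂ : Type*} [PseudoMetricSpace X₁] [PseudoMetricSpace X₂]
    (T₁ : X₁ → X₁) (T₂ : X₂ → X₂) {n : ℕ} {ε : ℝ} (hε : 0 < ε)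
    (E : Finset (X₁ × X₂))
    (hsep : ∀ p ∈ E, ∀ q ∈ E, p ≠ q →
      ∃ i < n, ε < dist ((Prod.map T₁ T₂)^[i] p) ((Prod.map T₁ T₂)^[i] q)) :
    ∃ (E₁ : Finset X₁) (E₂ : Finset X₂),
      ↑E₁ ⊆ Prod.fst '' (↑E : Set (X₁ × X₂)) ∧ ↑E₂ ⊆ Prod.snd '' (↑E : Set (X₁ × X₂)) ∧
      (∀ x ∈ E₁, ∀ y ∈ E₁, x ≠ y → ∃ i < n, ε / 2 < dist (T₁^[i] x) (T₁^[i] y)) ∧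
      (∀ x ∈ E₂, ∀ y ∈ E₂, x ≠ y → ∃ i < n, ε / 2 < dist (T₂^[i] x) (T₂^[i] y)) ∧
      E.card ≤ E₁.card * E₂.card := by
  classical
  have hβ : (0:ℝ) ≤ ε / 2 := by linarith
  obtain ⟨E₁, hE₁sub, hE₁sep, hE₁cov⟩ := exists_maximal_separated T₁ n hβ (E.image Prod.fst)
  obtain ⟨E₂, hE₂sub, hE₂sep, hE₂cov⟩ := exists_maximal_separated T₂ n hβ (E.image Prod.snd)
  refine ⟨E₁, E₂, ?_, ?_, hE₁sep, hE₂sep, ?_⟩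
  · intro x hx
    obtain ⟨p, hp, rfl⟩ := Finset.mem_image.1 (hE₁sub hx)
    exact ⟨p, hp, rfl⟩
  · intro x hx
    obtain ⟨p, hp, rfl⟩ := Finset.mem_image.1 (hE₂sub hx)
    exact ⟨p, hp, rfl⟩
  · set f : X₁ → X₁ := fun a =>
      if h : ∃ x ∈ E₁, ∀ i < n, dist (T₁^[i] a) (T₁^[i] x) ≤ ε / 2 then h.choose else a with hf
    set g : X₂ → X₂ := fun b =>
      if h : ∃ x ∈ E₂, ∀ i < n, dist (T₂^[i] b) (T₂^[i] x) ≤ ε / 2 then h.choose else b with hg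
    have hfprop : ∀ p ∈ E, f p.1 ∈ E₁ ∧ ∀ i < n, dist (T₁^[i] p.1) (T₁^[i] (f p.1)) ≤ ε / 2 := by
      intro p hp
      have hmem : p.1 ∈ E.image Prod.fst := Finset.mem_image_of_mem _ hp
      have hex := hE₁cov p.1 hmem
      rw [hf]
      simp only [dif_pos hex]
      exact ⟨hex.choose_spec.1, hex.choose_spec.2⟩
    have hgprop : ∀ p ∈ E, g p.2 ∈ E₂ ∧ ∀ i < n, dist (T₂^[i] p.2) (T₂^[i] (g p.2)) ≤ ε / 2 := by
      intro p hp
      have hmem : p.2 ∈ E.image Prod.snd := Finset.mem_image_of_mem _ hp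
      have hex := hE₂cov p.2 hmem
      rw [hg]
      simp only [dif_pos hex]
      exact ⟨hex.choose_spec.1, hex.choose_spec.2⟩
    have hcard : E.card ≤ (E₁ ×ˢ E₂).card := by
      apply Finset.card_le_card_of_injOn (fun p => (f p.1, g p.2))
      · intro p hp
        exact Finset.mem_product.2 ⟨(hfprop p hp).1, (hgprop p hp).1⟩
      · intro p hp q hq hpq
        by_contra hne
        obtain ⟨i, hi, hd⟩ := hsep p (Finset.mem_coe.1 hp) q (Finset.mem_coe.1 hq) hne
        rw [Prod.map_iterate] at hd
        have hde : dist (Prod.map T₁^[i] T₂^[i] p) (Prod.map T₁^[i] T₂^[i] q) =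
            max (dist (T₁^[i] p.1) (T₁^[i] q.1)) (dist (T₂^[i] p.2) (T₂^[i] q.2)) := by
          rw [Prod.dist_eq]; rfl
        rw [hde] at hd
        have hfeq : f p.1 = f q.1 := congrArg Prod.fst hpq
        have hgeq : g p.2 = g q.2 := congrArg Prod.snd hpq
        have h1 : dist (T₁^[i] p.1) (T₁^[i] q.1) ≤ ε := by
          have ha := (hfprop p (Finset.mem_coe.1 hp)).2 i hi
          have hb := (hfprop q (Finset.mem_coe.1 hq)).2 i hi
          rw [hfeq] at ha
          have := dist_triangle_right (T₁^[i] p.1) (T₁^[i] q.1) (T₁^[i] (f q.1))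
          linarith
        have h2 : dist (T₂^[i] p.2) (T₂^[i] q.2) ≤ ε := by
          have ha := (hgprop p (Finset.mem_coe.1 hp)).2 i hi
          have hb := (hgprop q (Finset.mem_coe.1 hq)).2 i hi
          rw [hgeq] at ha
          have := dist_triangle_right (T₂^[i] p.2) (T₂^[i] q.2) (T₂^[i] (g q.2))
          linarith
        exact absurd (max_le h1 h2) (not_le.2 hd)
    rwa [Finset.card_product] at hcard


lemma tsum_ite_geom (x : ℝ≥0∞) (N : ℕ) :
    ∑' m : ℕ, (if N ≤ m then x ^ m else 0) = (1 - x)⁻¹ * x ^ N := by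
  rw [← Summable.sum_add_tsum_nat_add' (f := fun m => if N ≤ m then x ^ m else 0) (k := N) ENNReal.summable]
  have h0 : ∑ i ∈ Finset.range N, (if N ≤ i then x ^ i else 0) = 0 := by
    apply Finset.sum_eq_zero
    intro i hi
    rw [Finset.mem_range] at hi
    rw [if_neg (by omega : ¬ N ≤ i)]
  rw [h0, zero_add]
  have h1 : ∀ i : ℕ, (if N ≤ i + N then x ^ (i + N) else 0) = x ^ i * x ^ N := by
    intro i
    rw [if_pos (Nat.le_add_left N i), pow_add]
  rw [tsum_congr h1, ENNReal.tsum_mul_right, ENNReal.tsum_geometric]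

set_option maxHeartbeats 1000000 in
lemma packingPre_prod_eq_zero {X₁ X₂ : Type*} [PseudoMetricSpace X₁] [PseudoMetricSpace X₂]
    (T₁ : X₁ → X₁) (T₂ : X₂ → X₂) {A : Set X₁} {B : Set X₂} {s₁ s₂ t ε : ℝ}
    (hε : 0 < ε) {N₁ N₂ : ℕ}
    (hC₁ : packingSum T₁ s₁ N₁ (ε / 6) A ≠ ⊤) (hC₂ : packingSum T₂ s₂ N₂ (ε / 6) B ≠ ⊤)
    (hst : s₁ + s₂ < t) :
    packingPre (Prod.map T₁ T₂) t ε (A ×ˢ B) = 0 := by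
  classical
  set C₁ := packingSum T₁ s₁ N₁ (ε / 6) A with hC₁def
  set C₂ := packingSum T₂ s₂ N₂ (ε / 6) B with hC₂def
  set a : ℝ := t - (s₁ + s₂) with ha_def
  have ha : 0 < a := by rw [ha_def]; linarith
  set x : ℝ≥0∞ := ENNReal.ofReal (Real.exp (-a)) with hx_def
  have hx1 : x < 1 := by
    rw [hx_def]
    rw [show (1 : ℝ≥0∞) = ENNReal.ofReal 1 by simp]
    exact ENNReal.ofReal_lt_ofReal_iff_of_nonneg (Real.exp_nonneg _) |>.2
      (by rw [show (1:ℝ) = Real.exp 0 by simp]; exact Real.exp_lt_exp.2 (by linarith))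
  -- key bound on packingSum for large N
  have key : ∀ N, max N₁ N₂ ≤ N →
      packingSum (Prod.map T₁ T₂) t N ε (A ×ˢ B) ≤ C₁ * C₂ * ((1 - x)⁻¹ * x ^ N) := by
    intro N hN
    apply iSup_le; intro F
    apply iSup_le; intro hFc
    apply iSup_le; intro hFmem
    apply iSup_le; intro hFdisj
    have hts : (∑' p : F, ENNReal.ofReal (Real.exp (-t * ((p : (X₁ × X₂) × ℕ).2 : ℝ))))
        = ∑' p : (X₁ × X₂) × ℕ,
            F.indicator (fun p => ENNReal.ofReal (Real.exp (-t * (p.2 : ℝ)))) p :=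
      tsum_subtype F (fun p => ENNReal.ofReal (Real.exp (-t * (p.2 : ℝ))))
    rw [hts, ENNReal.tsum_eq_iSup_sum]
    apply iSup_le; intro G
    -- restrict to members of F
    have hGsum : ∑ p ∈ G, F.indicator (fun p => ENNReal.ofReal (Real.exp (-t * (p.2 : ℝ)))) p
        = ∑ p ∈ G.filter (· ∈ F), ENNReal.ofReal (Real.exp (-t * (p.2 : ℝ))) := by
      rw [Finset.sum_filter]
      refine Finset.sum_congr rfl fun p _ => ?_
      by_cases hp : p ∈ F <;> simp [Set.indicator_apply, hp]
    rw [hGsum]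
    set G' := G.filter (· ∈ F) with hG'
    have hG'F : ∀ p ∈ G', p ∈ F := fun p hp => (Finset.mem_filter.1 hp).2
    -- fiber decomposition over second coordinates
    rw [← Finset.sum_fiberwise_of_maps_to (s := G') (t := G'.image Prod.snd) (g := Prod.snd)
      (fun p hp => Finset.mem_image_of_mem Prod.snd hp)
      (fun p => ENNReal.ofReal (Real.exp (-t * (p.2 : ℝ))))]
    -- bound each fiber
    have hfiber : ∀ m ∈ G'.image Prod.snd,
        (∑ p ∈ G'.filter fun p => p.2 = m, ENNReal.ofReal (Real.exp (-t * (p.2 : ℝ))))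
          ≤ C₁ * C₂ * x ^ m := by
      intro m hm
      obtain ⟨p₀, hp₀, hp₀2⟩ := Finset.mem_image.1 hm
      have hNm : N ≤ m := hp₀2 ▸ (hFmem p₀ (hG'F p₀ hp₀)).2
      set D := G'.filter fun p => p.2 = m with hD
      have hDval : ∀ p ∈ D, p.2 = m := fun p hp => (Finset.mem_filter.1 hp).2
      have hDF : ∀ p ∈ D, p ∈ F := fun p hp => hG'F p (Finset.mem_filter.1 hp).1
      have hsum1 : (∑ p ∈ D, ENNReal.ofReal (Real.exp (-t * (p.2 : ℝ))))
          = (D.card : ℝ≥0∞) * ENNReal.ofReal (Real.exp (-t * (m : ℝ))) := by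
        rw [Finset.sum_congr rfl fun p hp => by rw [hDval p hp]]
        rw [Finset.sum_const, nsmul_eq_mul]
      rw [hsum1]
      -- the first components form a separated set
      set E : Finset (X₁ × X₂) := D.image Prod.fst with hE
      have hcardE : E.card = D.card := by
        rw [hE]
        apply Finset.card_image_of_injOn
        intro p hp q hq hpq
        exact Prod.ext hpq ((hDval p hp).trans (hDval q hq).symm)
      have hEsub : ↑E ⊆ A ×ˢ B := by
        intro z hz
        obtain ⟨p, hp, rfl⟩ := Finset.mem_image.1 (Finset.mem_coe.1 hz)
        exact (hFmem p (hDF p hp)).1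
      have hEsep : ∀ p ∈ E, ∀ q ∈ E, p ≠ q →
          ∃ i < m, ε < dist ((Prod.map T₁ T₂)^[i] p) ((Prod.map T₁ T₂)^[i] q) := by
        intro z hz w hw hzw
        obtain ⟨p, hp, rfl⟩ := Finset.mem_image.1 hz
        obtain ⟨q, hq, rfl⟩ := Finset.mem_image.1 hw
        have hpq : p ≠ q := fun h => hzw (by rw [h])
        have hdisj := hFdisj (hDF p hp) (hDF q hq) hpq
        have hq1 : q.1 ∈ bowenClosedBall (Prod.map T₁ T₂) q.2 q.1 ε := by
          simp only [bowenClosedBall, Set.mem_setOf_eq]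
          intro k _
          simp [hε.le]
        have hq2 : q.1 ∉ bowenClosedBall (Prod.map T₁ T₂) p.2 p.1 ε := by
          intro hmem
          exact Set.disjoint_left.1 hdisj hmem hq1
        rw [bowenClosedBall, Set.mem_setOf_eq] at hq2
        push_neg at hq2
        obtain ⟨i, hi, hd⟩ := hq2
        rw [hDval p hp] at hi
        exact ⟨i, hi, hd⟩
      obtain ⟨E₁, E₂, hE₁sub, hE₂sub, hE₁sep, hE₂sep, hcardle⟩ :=
        product_separated T₁ T₂ hε E hEsep
      have hE₁A : ↑E₁ ⊆ A := by
        intro u hu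
        obtain ⟨z, hz, rfl⟩ := hE₁sub hu
        exact (hEsub hz).1
      have hE₂B : ↑E₂ ⊆ B := by
        intro u hu
        obtain ⟨z, hz, rfl⟩ := hE₂sub hu
        exact (hEsub hz).2
      have hb₁ : (E₁.card : ℝ≥0∞) * ENNReal.ofReal (Real.exp (-s₁ * (m : ℝ))) ≤ C₁ := by
        refine card_mul_le_packingSum T₁ s₁ N₁ m (ε / 6) A E₁ hE₁A (le_trans (le_max_left _ _) (hN.trans hNm)) ?_
        intro u hu v hv huv
        obtain ⟨i, hi, hd⟩ := hE₁sep u hu v hv huv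
        exact ⟨i, hi, by linarith⟩
      have hb₂ : (E₂.card : ℝ≥0∞) * ENNReal.ofReal (Real.exp (-s₂ * (m : ℝ))) ≤ C₂ := by
        refine card_mul_le_packingSum T₂ s₂ N₂ m (ε / 6) B E₂ hE₂B (le_trans (le_max_right _ _) (hN.trans hNm)) ?_
        intro u hu v hv huv
        obtain ⟨i, hi, hd⟩ := hE₂sep u hu v hv huv
        exact ⟨i, hi, by linarith⟩
      -- combine
      have hexp : ENNReal.ofReal (Real.exp (-t * (m : ℝ)))
          = ENNReal.ofReal (Real.exp (-s₁ * (m : ℝ))) *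
            ENNReal.ofReal (Real.exp (-s₂ * (m : ℝ))) * x ^ m := by
        rw [hx_def, ← ENNReal.ofReal_pow (Real.exp_nonneg _), ← Real.exp_nat_mul,
          ← ENNReal.ofReal_mul (Real.exp_nonneg _), ← Real.exp_add,
          ← ENNReal.ofReal_mul (Real.exp_nonneg _), ← Real.exp_add]
        congr 1
        rw [ha_def]
        ring
      calc (D.card : ℝ≥0∞) * ENNReal.ofReal (Real.exp (-t * (m : ℝ)))
          ≤ ((E₁.card * E₂.card : ℕ) : ℝ≥0∞) * ENNReal.ofReal (Real.exp (-t * (m : ℝ))) := by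
            apply mul_le_mul_left
            exact_mod_cast Nat.cast_le.2 (hcardE ▸ hcardle)
        _ = ((E₁.card : ℝ≥0∞) * ENNReal.ofReal (Real.exp (-s₁ * (m : ℝ)))) *
            ((E₂.card : ℝ≥0∞) * ENNReal.ofReal (Real.exp (-s₂ * (m : ℝ)))) * x ^ m := by
            rw [hexp]; push_cast; ring
        _ ≤ C₁ * C₂ * x ^ m := by
            exact mul_le_mul' (mul_le_mul' hb₁ hb₂) le_rfl
    calc ∑ m ∈ G'.image Prod.snd,
          ∑ p ∈ G'.filter fun p => p.2 = m, ENNReal.ofReal (Real.exp (-t * (p.2 : ℝ)))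
        ≤ ∑ m ∈ G'.image Prod.snd, C₁ * C₂ * x ^ m := Finset.sum_le_sum hfiber
      _ ≤ ∑ m ∈ G'.image Prod.snd, C₁ * C₂ * (if N ≤ m then x ^ m else 0) := by
          refine Finset.sum_le_sum fun m hm => ?_
          obtain ⟨p₀, hp₀, hp₀2⟩ := Finset.mem_image.1 hm
          have hNm : N ≤ m := hp₀2 ▸ (hFmem p₀ (hG'F p₀ hp₀)).2
          rw [if_pos hNm]
      _ = C₁ * C₂ * ∑ m ∈ G'.image Prod.snd, (if N ≤ m then x ^ m else 0) := by
          rw [Finset.mul_sum]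
      _ ≤ C₁ * C₂ * ∑' m : ℕ, (if N ≤ m then x ^ m else 0) := by
          exact mul_le_mul' le_rfl (ENNReal.sum_le_tsum _)
      _ = C₁ * C₂ * ((1 - x)⁻¹ * x ^ N) := by rw [tsum_ite_geom]
  -- conclude packingPre = 0
  refine le_antisymm ?_ zero_le
  set N₀ := max N₁ N₂ with hN₀
  have hxne : x ≠ ⊤ := ENNReal.ofReal_ne_top
  have hD : C₁ * C₂ * (1 - x)⁻¹ ≠ ⊤ := by
    refine ENNReal.mul_ne_top (ENNReal.mul_ne_top hC₁ hC₂) ?_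
    rw [Ne, ENNReal.inv_eq_top]
    exact fun h => absurd (tsub_eq_zero_iff_le.1 h) (not_le.2 hx1)
  have hbound : ∀ k : ℕ, packingPre (Prod.map T₁ T₂) t ε (A ×ˢ B)
      ≤ (C₁ * C₂ * (1 - x)⁻¹ * x ^ N₀) * x ^ k := by
    intro k
    refine le_trans (iInf_le _ (N₀ + k)) ?_
    refine (key (N₀ + k) (Nat.le_add_right _ _)).trans (le_of_eq ?_)
    rw [pow_add]
    ring
  have htend : Filter.Tendsto (fun k : ℕ => (C₁ * C₂ * (1 - x)⁻¹ * x ^ N₀) * x ^ k)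
      Filter.atTop (nhds 0) := by
    have h1 := ENNReal.tendsto_pow_atTop_nhds_zero_of_lt_one hx1
    have h2 := ENNReal.Tendsto.const_mul (a := C₁ * C₂ * (1 - x)⁻¹ * x ^ N₀) h1
      (Or.inr (ENNReal.mul_ne_top hD (ENNReal.pow_ne_top hxne)))
    simpa using h2
  exact ge_of_tendsto htend (Filter.Eventually.of_forall hbound)

end BowenProduct

set_option maxHeartbeats 1000000 in
/-- Subadditivity of packing entropy for products of two different systems:
`h^P(Z_1 × Z_2) ≤ h^P(Z_1) + h^P(Z_2)` in the system `(X_1 × X_2, ρ, T_1 × T_2)` with `ρ`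
the max product metric. -/
theorem BowenProduct.packingEntropy_prod_le₂ {X₁ X₂ : Type*}
    [MetricSpace X₁] [CompactSpace X₁] [MetricSpace X₂] [CompactSpace X₂]
    (T₁ : X₁ → X₁) (hT₁ : Continuous T₁) (T₂ : X₂ → X₂) (hT₂ : Continuous T₂)
    (Z₁ : Set X₁) (Z₂ : Set X₂) :
    BowenProduct.packingEntropy (Prod.map T₁ T₂) (Z₁ ×ˢ Z₂) ≤
      BowenProduct.packingEntropy T₁ Z₁ + BowenProduct.packingEntropy T₂ Z₂ := by
  classical
  by_cases h1 : BowenProduct.packingEntropy T₁ Z₁ = ⊤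
  · rw [h1, top_add]; exact le_top
  by_cases h2 : BowenProduct.packingEntropy T₂ Z₂ = ⊤
  · rw [h2, add_top]; exact le_top
  refine le_of_forall_gt_imp_ge_of_dense fun c hc => ?_
  obtain ⟨tt, htlt, htc⟩ := ENNReal.lt_iff_exists_nnreal_btwn.1 hc
  refine le_trans ?_ htc.le
  set h₁ := (BowenProduct.packingEntropy T₁ Z₁).toNNReal with hh₁def
  set h₂ := (BowenProduct.packingEntropy T₂ Z₂).toNNReal with hh₂def
  have hh₁ : (h₁ : ℝ≥0∞) = BowenProduct.packingEntropy T₁ Z₁ := ENNReal.coe_toNNReal h1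
  have hh₂ : (h₂ : ℝ≥0∞) = BowenProduct.packingEntropy T₂ Z₂ := ENNReal.coe_toNNReal h2
  have hsum_lt : h₁ + h₂ < tt := by
    rw [← ENNReal.coe_lt_coe] at *
    push_cast
    rw [hh₁, hh₂]
    exact htlt
  obtain ⟨u, hu1, hu2⟩ := exists_between hsum_lt
  set t₁ : ℝ≥0 := h₁ + (u - (h₁ + h₂)) with ht₁def
  set t₂ : ℝ≥0 := h₂ + (tt - u) with ht₂def
  have ht₁ : BowenProduct.packingEntropy T₁ Z₁ < (t₁ : ℝ≥0∞) := by
    rw [← hh₁]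
    exact_mod_cast lt_add_of_pos_right h₁ (tsub_pos_iff_lt.2 hu1)
  have ht₂ : BowenProduct.packingEntropy T₂ Z₂ < (t₂ : ℝ≥0∞) := by
    rw [← hh₂]
    exact_mod_cast lt_add_of_pos_right h₂ (tsub_pos_iff_lt.2 hu2)
  have htsum : t₁ + t₂ ≤ tt := by
    have e1 : t₁ + t₂ = (h₁ + h₂ + (u - (h₁ + h₂))) + (tt - u) := by
      rw [ht₁def, ht₂def]; ring
    rw [e1, add_tsub_cancel_of_le hu1.le, add_tsub_cancel_of_le hu2.le]
  refine iSup₂_le fun ε hε => ?_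
  have hε6 : (0:ℝ) < ε / 6 := by linarith
  -- side 1
  have hle₁ : BowenProduct.packingEntropyEps T₁ (ε / 6) Z₁ < (t₁ : ℝ≥0∞) :=
    lt_of_le_of_lt
      (le_iSup₂ (f := fun (ε : ℝ) (_ : 0 < ε) => BowenProduct.packingEntropyEps T₁ ε Z₁)
        (ε / 6) hε6) ht₁
  rw [BowenProduct.packingEntropyEps, iInf_lt_iff] at hle₁
  obtain ⟨s₁, hs₁⟩ := hle₁
  rw [iInf_lt_iff] at hs₁
  obtain ⟨hmeas₁, hs₁lt⟩ := hs₁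
  have hle₂ : BowenProduct.packingEntropyEps T₂ (ε / 6) Z₂ < (t₂ : ℝ≥0∞) :=
    lt_of_le_of_lt
      (le_iSup₂ (f := fun (ε : ℝ) (_ : 0 < ε) => BowenProduct.packingEntropyEps T₂ ε Z₂)
        (ε / 6) hε6) ht₂
  rw [BowenProduct.packingEntropyEps, iInf_lt_iff] at hle₂
  obtain ⟨s₂, hs₂⟩ := hle₂
  rw [iInf_lt_iff] at hs₂
  obtain ⟨hmeas₂, hs₂lt⟩ := hs₂
  -- extract covers
  have hm₁ : BowenProduct.packingMeasureEps T₁ (s₁ : ℝ) (ε / 6) Z₁ < 1 := by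
    rw [hmeas₁]; exact zero_lt_one
  rw [BowenProduct.packingMeasureEps, iInf_lt_iff] at hm₁
  obtain ⟨Zs₁, hZs₁⟩ := hm₁
  rw [iInf_lt_iff] at hZs₁
  obtain ⟨hcov₁, hsum₁⟩ := hZs₁
  have hm₂ : BowenProduct.packingMeasureEps T₂ (s₂ : ℝ) (ε / 6) Z₂ < 1 := by
    rw [hmeas₂]; exact zero_lt_one
  rw [BowenProduct.packingMeasureEps, iInf_lt_iff] at hm₂
  obtain ⟨Zs₂, hZs₂⟩ := hm₂
  rw [iInf_lt_iff] at hZs₂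
  obtain ⟨hcov₂, hsum₂⟩ := hZs₂
  have hpre₁ : ∀ i, ∃ N, BowenProduct.packingSum T₁ (s₁ : ℝ) N (ε / 6) (Zs₁ i) ≠ ⊤ := by
    intro i
    have hlt : BowenProduct.packingPre T₁ (s₁ : ℝ) (ε / 6) (Zs₁ i) < ⊤ :=
      (ENNReal.le_tsum i).trans_lt (hsum₁.trans_le le_top)
    rw [BowenProduct.packingPre, iInf_lt_iff] at hlt
    obtain ⟨N, hN⟩ := hlt
    exact ⟨N, hN.ne⟩
  have hpre₂ : ∀ i, ∃ N, BowenProduct.packingSum T₂ (s₂ : ℝ) N (ε / 6) (Zs₂ i) ≠ ⊤ := by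
    intro i
    have hlt : BowenProduct.packingPre T₂ (s₂ : ℝ) (ε / 6) (Zs₂ i) < ⊤ :=
      (ENNReal.le_tsum i).trans_lt (hsum₂.trans_le le_top)
    rw [BowenProduct.packingPre, iInf_lt_iff] at hlt
    obtain ⟨N, hN⟩ := hlt
    exact ⟨N, hN.ne⟩
  choose NN₁ hNN₁ using hpre₁
  choose NN₂ hNN₂ using hpre₂
  have hs₁R : (s₁ : ℝ) < (t₁ : ℝ) := NNReal.coe_lt_coe.2 (ENNReal.coe_lt_coe.1 hs₁lt)
  have hs₂R : (s₂ : ℝ) < (t₂ : ℝ) := NNReal.coe_lt_coe.2 (ENNReal.coe_lt_coe.1 hs₂lt)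
  have httR : (t₁ : ℝ) + (t₂ : ℝ) ≤ (tt : ℝ) := by exact_mod_cast htsum
  have hstR : (s₁ : ℝ) + (s₂ : ℝ) < (tt : ℝ) := by linarith
  set Ws : ℕ → Set (X₁ × X₂) := fun m => Zs₁ m.unpair.1 ×ˢ Zs₂ m.unpair.2 with hWs
  have hcov : Z₁ ×ˢ Z₂ ⊆ ⋃ m, Ws m := by
    rintro ⟨z₁, z₂⟩ ⟨hz₁, hz₂⟩
    have h₁' := hcov₁ hz₁
    rw [Set.mem_iUnion] at h₁'
    obtain ⟨i, hi⟩ := h₁'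
    have h₂' := hcov₂ hz₂
    rw [Set.mem_iUnion] at h₂'
    obtain ⟨j, hj⟩ := h₂'
    refine Set.mem_iUnion.2 ⟨Nat.pair i j, ?_⟩
    rw [hWs]
    simp only [Nat.unpair_pair]
    exact Set.mk_mem_prod hi hj
  have hmeas : BowenProduct.packingMeasureEps (Prod.map T₁ T₂) (tt : ℝ) ε (Z₁ ×ˢ Z₂) = 0 := by
    refine le_antisymm ?_ zero_le
    rw [BowenProduct.packingMeasureEps]
    refine le_trans (iInf₂_le Ws hcov) (le_of_eq (ENNReal.tsum_eq_zero.2 fun m => ?_))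
    exact BowenProduct.packingPre_prod_eq_zero T₁ T₂ hε (hNN₁ _) (hNN₂ _) hstR
  calc BowenProduct.packingEntropyEps (Prod.map T₁ T₂) ε (Z₁ ×ˢ Z₂)
      ≤ (tt : ℝ≥0∞) := by
        rw [BowenProduct.packingEntropyEps]
        exact iInf₂_le tt hmeas
    _ ≤ (tt : ℝ≥0∞) := le_rfl
end
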